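/- Let (Σ,d) be a compact metric space, μ a Borel probability measure on Σ, k ∈ ℕ, x₁,…,x_k ∈ Σ, s > 0 and ε ∈ (0,1), and suppose μ( ⋃_{i=1}^k B_s(x_i) ) ≥ 1 − ε. Then there exist t₁,…,t_k ≥ 0 with ∑_{i=1}^k t_i = 1 such that the measure σ = ∑_{i=1}^k t_i δ_{x_i} satisfies d_KR(μ, σ) ≤ 2ε + s. In particular d_KR(μ, Σ_k) ≤ 2ε + s. -/

import Mathlib

open MeasureTheory

/-- The Kantorovich–Rubinstein distance between two Borel measures on a metric space:
`d_KR(μ,ν) = sup { |∫ φ dμ − ∫ φ dν| : sup|φ| ≤ 1, φ 1-Lipschitz }`. -/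
noncomputable def dKR {X : Type*} [MeasurableSpace X] [MetricSpace X]
    (μ ν : Measure X) : ℝ :=
  sSup {r | ∃ φ : X → ℝ, (∀ x, |φ x| ≤ 1) ∧ LipschitzWith 1 φ ∧
    r = |∫ x, φ x ∂μ - ∫ x, φ x ∂ν|}

/-- The `d_KR`-distance from a measure to a set of measures. -/
noncomputable def dKRSet {X : Type*} [MeasurableSpace X] [MetricSpace X]
    (μ : Measure X) (S : Set (Measure X)) : ℝ :=
  sInf {r | ∃ σ ∈ S, r = dKR μ σ}

/-- The set `Σ_k` of formal barycenters: measures of the form `∑ᵢ tᵢ δ_{xᵢ}` with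
`tᵢ ≥ 0`, `∑ tᵢ = 1`, `xᵢ ∈ X`. -/
def formalBarycenters (X : Type*) [MeasurableSpace X] (k : ℕ) : Set (Measure X) :=
  {μ | ∃ (t : Fin k → ℝ) (x : Fin k → X), (∀ i, 0 ≤ t i) ∧ (∑ i, t i) = 1 ∧
    μ = ∑ i, ENNReal.ofReal (t i) • Measure.dirac (x i)}

/-- if a Borel probability measure `μ` on a compact metric space gives mass at
least `1 − ε` to a union of `k` balls of radius `s`, then there is a formal barycenter
`σ = ∑ tᵢ δ_{xᵢ}` supported at the centres with `d_KR(μ,σ) ≤ 2ε + s`; in particular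
`d_KR(μ, Σ_k) ≤ 2ε + s`. -/
theorem dKR_le_of_mass_on_balls (X : Type*) [MetricSpace X] [CompactSpace X]
    [MeasurableSpace X] [BorelSpace X]
    (μ : Measure X) [IsProbabilityMeasure μ] (k : ℕ) (x : Fin k → X)
    (s ε : ℝ) (hs : 0 < s) (hε0 : 0 < ε) (hε1 : ε < 1)
    (hmass : ENNReal.ofReal (1 - ε) ≤ μ (⋃ i, Metric.ball (x i) s)) :
    ∃ t : Fin k → ℝ, (∀ i, 0 ≤ t i) ∧ (∑ i, t i) = 1 ∧
      dKR μ (∑ i, ENNReal.ofReal (t i) • Measure.dirac (x i)) ≤ 2 * ε + s ∧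
      dKRSet μ (formalBarycenters X k) ≤ 2 * ε + s := by
  classical
  rcases Nat.eq_zero_or_pos k with hk | hk
  · exfalso
    subst hk
    rw [Set.iUnion_of_empty, measure_empty, le_zero_iff, ENNReal.ofReal_eq_zero] at hmass
    linarith
  set i₀ : Fin k := ⟨0, hk⟩
  set B : Fin k → Set X := fun i => Metric.ball (x i) s with hB
  set A : Fin k → Set X := fun i => B i \ ⋃ j, ⋃ (_ : j < i), B j with hA
  set U : Set X := ⋃ i, B i with hU
  have hBm : ∀ i, MeasurableSet (B i) := fun i => measurableSet_ball
  have hAm : ∀ i, MeasurableSet (A i) := fun i =>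
    (hBm i).diff (MeasurableSet.iUnion fun j => MeasurableSet.iUnion fun _ => hBm j)
  have hAsub : ∀ i, A i ⊆ B i := fun i => Set.diff_subset
  have hUm : MeasurableSet U := MeasurableSet.iUnion hBm
  have hdisj' : ∀ i j : Fin k, i < j → Disjoint (A i) (A j) := by
    intro i j hij
    refine Set.disjoint_left.2 fun a hai haj => ?_
    exact haj.2 (Set.mem_iUnion.2 ⟨i, Set.mem_iUnion.2 ⟨hij, hai.1⟩⟩)
  have hAdisj : Pairwise (Function.onFun Disjoint A) := by
    intro i j hij
    rcases hij.lt_or_gt with h | h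
    · exact hdisj' i j h
    · exact (hdisj' j i h).symm
  have hAU : ⋃ i, A i = U := by
    apply Set.Subset.antisymm
    · exact Set.iUnion_mono fun i => hAsub i
    · intro y hy
      obtain ⟨i, hi⟩ := Set.mem_iUnion.1 hy
      have hne : (Finset.univ.filter (fun j : Fin k => y ∈ B j)).Nonempty :=
        ⟨i, by simp [hi]⟩
      obtain ⟨m, hm, hmin⟩ := Finset.exists_min_image _ id hne
      simp only [Finset.mem_filter] at hm
      refine Set.mem_iUnion.2 ⟨m, hm.2, fun hmem => ?_⟩
      obtain ⟨j, hj⟩ := Set.mem_iUnion.1 hmem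
      obtain ⟨hjm, hyj⟩ := Set.mem_iUnion.1 hj
      exact absurd (hmin j (by simp [hyj])) (not_le.2 hjm)
  -- measures of the pieces
  set a : Fin k → ℝ := fun i => (μ (A i)).toReal with ha
  set c : ℝ := (μ Uᶜ).toReal with hc
  have ha0 : ∀ i, 0 ≤ a i := fun i => ENNReal.toReal_nonneg
  have hc0 : 0 ≤ c := ENNReal.toReal_nonneg
  have hsumA : ∑ i, a i = (μ U).toReal := by
    rw [← hAU, measure_iUnion hAdisj hAm, tsum_fintype, ENNReal.toReal_sum]
    exact fun i _ => measure_ne_top μ _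
  have hUc : (μ U).toReal + c = 1 := by
    rw [hc, ← ENNReal.toReal_add (measure_ne_top μ _) (measure_ne_top μ _),
      measure_add_measure_compl hUm, measure_univ, ENNReal.toReal_one]
  have hcε : c ≤ ε := by
    have h1 : μ Uᶜ ≤ ENNReal.ofReal ε := by
      have h2 : μ Uᶜ = 1 - μ U := prob_compl_eq_one_sub hUm
      rw [h2]
      calc 1 - μ U ≤ 1 - ENNReal.ofReal (1 - ε) := tsub_le_tsub_left hmass 1
        _ = ENNReal.ofReal 1 - ENNReal.ofReal (1 - ε) := by rw [ENNReal.ofReal_one]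
        _ = ENNReal.ofReal (1 - (1 - ε)) := (ENNReal.ofReal_sub 1 (by linarith)).symm
        _ = ENNReal.ofReal ε := by ring_nf
    exact ENNReal.toReal_le_of_le_ofReal (le_of_lt hε0) h1
  have hμU1 : (μ U).toReal ≤ 1 := by
    have := prob_le_one (μ := μ) (s := U)
    exact ENNReal.toReal_le_of_le_ofReal one_pos.le (by simpa using this)
  -- the weights
  set t : Fin k → ℝ := fun i => a i + if i = i₀ then c else 0 with ht
  have ht0 : ∀ i, 0 ≤ t i := by
    intro i
    have : (0:ℝ) ≤ if i = i₀ then c else 0 := by split <;> simp [hc0]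
    exact add_nonneg (ha0 i) this
  have htsum : ∑ i, t i = 1 := by
    rw [ht]
    rw [Finset.sum_add_distrib, Finset.sum_ite_eq' Finset.univ i₀ (fun _ => c)]
    simp [hsumA, hUc]
  -- the formal barycenter
  set σ : Measure X := ∑ i, ENNReal.ofReal (t i) • Measure.dirac (x i) with hσ
  -- main estimate for each test function
  have key : ∀ φ : X → ℝ, (∀ y, |φ y| ≤ 1) → LipschitzWith 1 φ →
      |∫ y, φ y ∂μ - ∫ y, φ y ∂σ| ≤ 2 * ε + s := by
    intro φ hφ1 hφlip
    have hφc : Continuous φ := hφlip.continuous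
    have hφint : Integrable φ μ :=
      (integrable_const 1).mono' hφc.aestronglyMeasurable
        (Filter.Eventually.of_forall fun y => by simpa [Real.norm_eq_abs] using hφ1 y)
    -- integral against σ
    have hσint : ∫ y, φ y ∂σ = ∑ i, t i * φ (x i) := by
      rw [hσ, integral_finset_sum_measure]
      · refine Finset.sum_congr rfl fun i _ => ?_
        rw [integral_smul_measure, integral_dirac]
        simp [ENNReal.toReal_ofReal (ht0 i), smul_eq_mul]
      · intro i _
        refine Integrable.smul_measure ?_ ENNReal.ofReal_ne_top
        exact (integrable_const 1).mono' hφc.aestronglyMeasurable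
          (Filter.Eventually.of_forall fun y => by simpa [Real.norm_eq_abs] using hφ1 y)
    -- decomposition of the μ-integral
    have hdecomp : ∫ y, φ y ∂μ = (∑ i, ∫ y in A i, φ y ∂μ) + ∫ y in Uᶜ, φ y ∂μ := by
      rw [← integral_add_compl hUm hφint, ← hAU,
        integral_iUnion_fintype hAm hAdisj fun i => hφint.integrableOn]
    -- splitting the sum of t i * φ (x i)
    have hsumt : ∑ i, t i * φ (x i) = (∑ i, a i * φ (x i)) + c * φ (x i₀) := by
      rw [ht]
      simp only [add_mul, ite_mul, zero_mul]
      rw [Finset.sum_add_distrib, Finset.sum_ite_eq' Finset.univ i₀ (fun i => c * φ (x i))]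
      simp
    -- termwise estimates
    have hterm : ∀ i, |(∫ y in A i, φ y ∂μ) - a i * φ (x i)| ≤ s * a i := by
      intro i
      have heq : (∫ y in A i, φ y ∂μ) - a i * φ (x i)
          = ∫ y in A i, (φ y - φ (x i)) ∂μ := by
        rw [integral_sub hφint.integrableOn (integrableOn_const (measure_ne_top μ _)),
          setIntegral_const, smul_eq_mul]; rfl
      rw [heq]
      have := norm_setIntegral_le_of_norm_le_const (measure_lt_top μ (A i))
        (C := s) (f := fun y => φ y - φ (x i)) ?_
      · simpa [Real.norm_eq_abs, ha, Measure.real] using this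
      · intro y hy
        have hd : dist (φ y) (φ (x i)) ≤ dist y (x i) := by
          simpa using hφlip.dist_le_mul y (x i)
        have hball : dist y (x i) < s := Metric.mem_ball.1 (hAsub i hy)
        calc ‖φ y - φ (x i)‖ = dist (φ y) (φ (x i)) := by rw [Real.dist_eq, Real.norm_eq_abs]
          _ ≤ dist y (x i) := hd
          _ ≤ s := hball.le
    have hlast : |(∫ y in Uᶜ, φ y ∂μ) - c * φ (x i₀)| ≤ 2 * c := by
      have heq : (∫ y in Uᶜ, φ y ∂μ) - c * φ (x i₀)
          = ∫ y in Uᶜ, (φ y - φ (x i₀)) ∂μ := by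
        rw [integral_sub hφint.integrableOn (integrableOn_const (measure_ne_top μ _)),
          setIntegral_const, smul_eq_mul]; rfl
      rw [heq]
      have := norm_setIntegral_le_of_norm_le_const (measure_lt_top μ Uᶜ)
        (C := 2) (f := fun y => φ y - φ (x i₀)) ?_
      · simpa [Real.norm_eq_abs, hc, Measure.real] using this
      · intro y _
        have := abs_sub (φ y) (φ (x i₀))
        calc ‖φ y - φ (x i₀)‖ = |φ y - φ (x i₀)| := Real.norm_eq_abs _
          _ ≤ |φ y| + |φ (x i₀)| := abs_sub _ _
          _ ≤ 1 + 1 := add_le_add (hφ1 y) (hφ1 (x i₀))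
          _ = 2 := by norm_num
    -- put it all together
    rw [hσint, hdecomp, hsumt]
    have hre : (∑ i, ∫ y in A i, φ y ∂μ) + (∫ y in Uᶜ, φ y ∂μ)
        - ((∑ i, a i * φ (x i)) + c * φ (x i₀))
        = (∑ i, ((∫ y in A i, φ y ∂μ) - a i * φ (x i)))
          + ((∫ y in Uᶜ, φ y ∂μ) - c * φ (x i₀)) := by
      rw [Finset.sum_sub_distrib]; ring
    rw [hre]
    calc |(∑ i, ((∫ y in A i, φ y ∂μ) - a i * φ (x i)))
          + ((∫ y in Uᶜ, φ y ∂μ) - c * φ (x i₀))|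
        ≤ |∑ i, ((∫ y in A i, φ y ∂μ) - a i * φ (x i))|
          + |(∫ y in Uᶜ, φ y ∂μ) - c * φ (x i₀)| := abs_add_le _ _
      _ ≤ (∑ i, |(∫ y in A i, φ y ∂μ) - a i * φ (x i)|) + 2 * c :=
          add_le_add (Finset.abs_sum_le_sum_abs _ _) hlast
      _ ≤ (∑ i, s * a i) + 2 * c :=
          add_le_add (Finset.sum_le_sum fun i _ => hterm i) le_rfl
      _ = s * (μ U).toReal + 2 * c := by rw [← Finset.mul_sum, hsumA]
      _ ≤ s * 1 + 2 * ε := add_le_add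
          (mul_le_mul_of_nonneg_left hμU1 hs.le)
          (mul_le_mul_of_nonneg_left hcε (by norm_num))
      _ = 2 * ε + s := by ring
  have hdKR : dKR μ σ ≤ 2 * ε + s := by
    apply Real.sSup_le
    · rintro r ⟨φ, h1, h2, rfl⟩
      exact key φ h1 h2
    · positivity
  refine ⟨t, ht0, htsum, hdKR, ?_⟩
  have hmem : σ ∈ formalBarycenters X k := ⟨t, x, ht0, htsum, rfl⟩
  have hbdd : BddBelow {r | ∃ σ' ∈ formalBarycenters X k, r = dKR μ σ'} := by
    refine ⟨0, ?_⟩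
    rintro r ⟨σ', _, rfl⟩
    exact Real.sSup_nonneg (by rintro r ⟨φ, _, _, rfl⟩; exact abs_nonneg _)
  calc dKRSet μ (formalBarycenters X k) ≤ dKR μ σ := csInf_le hbdd ⟨σ, hmem, rfl⟩
    _ ≤ 2 * ε + s := hdKR
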